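/- Let α ∈ R_g with F_α = F∘α, and let w : [0,1) → ℝ be locally Lipschitz (Lipschitz on [0,a] for every a < 1) with w(0) = 0. Fix p ≥ 2 and assume ∫₀¹ |w|^p F_α |α'|_g dt < ∞. Then λ_{1,p}(α) ≤ (∫₀¹ |w'|^p F_α |α'|_g^{1−p} dt) / (∫₀¹ |w|^p F_α |α'|_g dt). -/

import Mathlib

open Set MeasureTheory Filter Topology

noncomputable section

/-- The closed quarter plane `P`. -/
def Pset : Set (ℝ × ℝ) := {z | 0 ≤ z.1 ∧ 0 ≤ z.2}

/-- The interior `P°` of the quarter plane. -/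
def Pint : Set (ℝ × ℝ) := {z | 0 < z.1 ∧ 0 < z.2}

/-- The boundary `∂P` of the quarter plane. -/
def Pbdry : Set (ℝ × ℝ) := {z | (0 ≤ z.1 ∧ 0 ≤ z.2) ∧ (z.1 = 0 ∨ z.2 = 0)}

/-- `F(x,y) = c_n x^(n-1) y^(n-1)`. -/
def Fvol (n : ℕ) (cn : ℝ) (z : ℝ × ℝ) : ℝ := cn * z.1 ^ (n - 1) * z.2 ^ (n - 1)

/-- Euclidean speed of a curve at `t`, computed with derivatives within `s`. -/
def gSpeedOn (s : Set ℝ) (α : ℝ → ℝ × ℝ) (t : ℝ) : ℝ :=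
  Real.sqrt ((derivWithin (fun u => (α u).1) s t) ^ 2 + (derivWithin (fun u => (α u).2) s t) ^ 2)

/-- Euclidean speed of a curve defined on `[0,1]`. -/
def gSpeed (α : ℝ → ℝ × ℝ) : ℝ → ℝ := gSpeedOn (Icc 0 1) α

/-- Euclidean length `L_g` of a curve on `[0,1]`. -/
def Lg (α : ℝ → ℝ × ℝ) : ℝ := ∫ t in (0:ℝ)..1, gSpeed α t

/-- The `h`-speed `|γ'|_h = F(γ) |γ'|_g`, with derivatives within `s`. -/
def hSpeedOn (n : ℕ) (cn : ℝ) (s : Set ℝ) (α : ℝ → ℝ × ℝ) (t : ℝ) : ℝ :=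
  Fvol n cn (α t) * gSpeedOn s α t

/-- The `h`-speed for curves defined on `[0,1)`. -/
def hSpeed (n : ℕ) (cn : ℝ) (α : ℝ → ℝ × ℝ) : ℝ → ℝ := hSpeedOn n cn (Ico 0 1) α

/-- The `h`-length `L_h` of a curve on `[0,1)`. -/
def Lh (n : ℕ) (cn : ℝ) (α : ℝ → ℝ × ℝ) : ℝ := ∫ t in (0:ℝ)..1, hSpeed n cn α t

/-- Numerator integrand of the `g`-Rayleigh quotient:
`|w'(t)|^p F(α t) |α'(t)|_g^(1-p)`. -/
def numG (n : ℕ) (cn p : ℝ) (s : Set ℝ) (α : ℝ → ℝ × ℝ) (w : ℝ → ℝ) (t : ℝ) : ℝ :=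
  |derivWithin w (Icc 0 1) t| ^ p * Fvol n cn (α t) * gSpeedOn s α t ^ (1 - p)

/-- Denominator integrand of the `g`-Rayleigh quotient:
`|w(t)|^p F(α t) |α'(t)|_g`. -/
def denG (n : ℕ) (cn p : ℝ) (s : Set ℝ) (α : ℝ → ℝ × ℝ) (w : ℝ → ℝ) (t : ℝ) : ℝ :=
  |w t| ^ p * Fvol n cn (α t) * gSpeedOn s α t

/-- First Dirichlet eigenvalue of the `p`-Laplacian along a curve, `g`-form:
infimum of the Rayleigh quotient over Lipschitz test functions on `[0,1]`
vanishing at `0` (with admissible, i.e. integrable with positive denominator,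
Rayleigh quotients). -/
def lambdaGOn (n : ℕ) (cn p : ℝ) (s : Set ℝ) (α : ℝ → ℝ × ℝ) : ℝ :=
  sInf {q | ∃ w : ℝ → ℝ, (∃ K, LipschitzOnWith K w (Icc 0 1)) ∧ w 0 = 0 ∧
    IntervalIntegrable (numG n cn p s α w) volume 0 1 ∧
    IntervalIntegrable (denG n cn p s α w) volume 0 1 ∧
    (0 < ∫ t in (0:ℝ)..1, denG n cn p s α w t) ∧
    q = (∫ t in (0:ℝ)..1, numG n cn p s α w t) / (∫ t in (0:ℝ)..1, denG n cn p s α w t)}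

/-- `λ_{1,p}` in the `g`-form for curves on `[0,1]`. -/
def lambdaG (n : ℕ) (cn p : ℝ) (α : ℝ → ℝ × ℝ) : ℝ := lambdaGOn n cn p (Icc 0 1) α

/-- Numerator integrand of the `h`-Rayleigh quotient on `[c,d]`:
`|w'(t)|^p F(γ t)^p |γ'(t)|_h^(1-p)`. -/
def numH (n : ℕ) (cn p c d : ℝ) (s : Set ℝ) (γ : ℝ → ℝ × ℝ) (w : ℝ → ℝ) (t : ℝ) : ℝ :=
  |derivWithin w (Icc c d) t| ^ p * Fvol n cn (γ t) ^ p * hSpeedOn n cn s γ t ^ (1 - p)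

/-- Denominator integrand of the `h`-Rayleigh quotient: `|w(t)|^p |γ'(t)|_h`. -/
def denH (n : ℕ) (cn p : ℝ) (s : Set ℝ) (γ : ℝ → ℝ × ℝ) (w : ℝ → ℝ) (t : ℝ) : ℝ :=
  |w t| ^ p * hSpeedOn n cn s γ t

/-- `λ_{1,p}` in the `h`-form for a curve on `[c,d)`, with test functions
Lipschitz on `[c,d]` vanishing at `c`. -/
def lambdaHOn (n : ℕ) (cn p c d : ℝ) (s : Set ℝ) (γ : ℝ → ℝ × ℝ) : ℝ :=
  sInf {q | ∃ w : ℝ → ℝ, (∃ K, LipschitzOnWith K w (Icc c d)) ∧ w c = 0 ∧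
    IntervalIntegrable (numH n cn p c d s γ w) volume c d ∧
    IntervalIntegrable (denH n cn p s γ w) volume c d ∧
    (0 < ∫ t in c..d, denH n cn p s γ w t) ∧
    q = (∫ t in c..d, numH n cn p c d s γ w t) / (∫ t in c..d, denH n cn p s γ w t)}

/-- `λ_{1,p}` in the `h`-form for curves on `[0,1)`. -/
def lambdaH (n : ℕ) (cn p : ℝ) (γ : ℝ → ℝ × ℝ) : ℝ :=
  lambdaHOn n cn p 0 1 (Ico 0 1) γ

/-- The class `𝒞` of `C¹` curves from `(x₀,y₀)` to the boundary, with constant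
speed, interior image on `[0,1)`, endpoint away from the origin, and meeting the
boundary orthogonally. -/
def MemC (x0 y0 : ℝ) (α : ℝ → ℝ × ℝ) : Prop :=
  ContDiffOn ℝ 1 α (Icc 0 1) ∧
  α 0 = (x0, y0) ∧
  (∀ t ∈ Ico (0:ℝ) 1, α t ∈ Pint) ∧
  α 1 ∈ Pbdry ∧ α 1 ≠ ((0 : ℝ), (0 : ℝ)) ∧
  (∀ t ∈ Icc (0:ℝ) 1, gSpeed α t = Lg α) ∧
  ((α 1).1 = 0 → derivWithin (fun u => (α u).2) (Icc 0 1) 1 = 0) ∧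
  ((α 1).2 = 0 → derivWithin (fun u => (α u).1) (Icc 0 1) 1 = 0)

/-- The Simons cone curve `σ(t) = (1-t)·(R,R)`. -/
def simonsCurve (R : ℝ) : ℝ → ℝ × ℝ := fun t => ((1 - t) * R, (1 - t) * R)

/-- The class `R_h`: locally Lipschitz curves on `[0,1)` with image in `P°`,
starting at `(x₀,y₀)`, with essentially bounded `h`-speed, reaching the collapsed
boundary point as `t → 1` (i.e. `x(γ t)·y(γ t) → 0`). -/
def MemRh (n : ℕ) (cn x0 y0 : ℝ) (γ : ℝ → ℝ × ℝ) : Prop :=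
  γ 0 = (x0, y0) ∧
  (∀ t ∈ Ico (0:ℝ) 1, γ t ∈ Pint) ∧
  (∀ a ∈ Ico (0:ℝ) 1, ∃ K, LipschitzOnWith K γ (Icc 0 a)) ∧
  (∃ M : ℝ, ∀ᵐ t ∂(volume : Measure ℝ), t ∈ Ico (0:ℝ) 1 → hSpeed n cn γ t ≤ M) ∧
  Tendsto (fun t => (γ t).1 * (γ t).2) (𝓝[<] (1:ℝ)) (𝓝 0)

/-- The class `R_h^+`: continuous curves on `[0,1]` into `P` ending on `∂P`
whose restriction to `[0,1)` belongs to `R_h`. -/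
def MemRhPlus (n : ℕ) (cn x0 y0 : ℝ) (α : ℝ → ℝ × ℝ) : Prop :=
  ContinuousOn α (Icc 0 1) ∧ (∀ t ∈ Icc (0:ℝ) 1, α t ∈ Pset) ∧ α 1 ∈ Pbdry ∧
  MemRh n cn x0 y0 α

/-- The class `R_g`: Lipschitz curves on `[0,1]` from `(x₀,y₀)` to `∂P` with
interior image on `[0,1)`. -/
def MemRg (x0 y0 : ℝ) (α : ℝ → ℝ × ℝ) : Prop :=
  (∃ K, LipschitzOnWith K α (Icc 0 1)) ∧ α 0 = (x0, y0) ∧ α 1 ∈ Pbdry ∧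
  ∀ t ∈ Ico (0:ℝ) 1, α t ∈ Pint

/-- The coordinate `u(x,y) = (x² - y²)/2`. -/
def ucoord (z : ℝ × ℝ) : ℝ := (z.1 ^ 2 - z.2 ^ 2) / 2

/-- The coordinate `v(x,y) = xy`. -/
def vcoord (z : ℝ × ℝ) : ℝ := z.1 * z.2

/-- The coordinate `r = √(u² + v²)`. -/
def rcoord (z : ℝ × ℝ) : ℝ := Real.sqrt (ucoord z ^ 2 + vcoord z ^ 2)

/-- The class `R_g^*`: simple curves in `R_g` with a.e. constant speed,
`u(α(1)) > 0`, and `v(α(t)) ≥ c(1-t)` for some `c > 0`. -/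
def MemRgStar (x0 y0 : ℝ) (α : ℝ → ℝ × ℝ) : Prop :=
  MemRg x0 y0 α ∧ InjOn α (Icc 0 1) ∧
  (∀ᵐ t ∂(volume : Measure ℝ), t ∈ Icc (0:ℝ) 1 → gSpeed α t = Lg α) ∧
  0 < ucoord (α 1) ∧
  ∃ c > (0:ℝ), ∀ t ∈ Icc (0:ℝ) 1, c * (1 - t) ≤ vcoord (α t)

/-! ### Auxiliary machinery for Statement 13 -/

/-- measurable version of the speed, using full derivatives -/
private def Gfun (α : ℝ → ℝ × ℝ) : ℝ → ℝ := fun t =>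
  Real.sqrt ((deriv (fun u => (α u).1) t) ^ 2 + (deriv (fun u => (α u).2) t) ^ 2)

private lemma Gfun_meas (α : ℝ → ℝ × ℝ) : Measurable (Gfun α) :=
  (((measurable_deriv _).pow_const 2).add ((measurable_deriv _).pow_const 2)).sqrt

private lemma Gfun_nonneg (α : ℝ → ℝ × ℝ) (t : ℝ) : 0 ≤ Gfun α t := Real.sqrt_nonneg _

private lemma Fvol_continuous (n : ℕ) (cn : ℝ) : Continuous (Fvol n cn) := by
  unfold Fvol
  exact (continuous_const.mul (continuous_fst.pow _)).mul (continuous_snd.pow _)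

private lemma speed_eq_Gfun (α : ℝ → ℝ × ℝ) {t : ℝ} (ht : t ∈ Ioo (0:ℝ) 1) :
    gSpeedOn (Icc 0 1) α t = Gfun α t := by
  have h1 : Icc (0:ℝ) 1 ∈ 𝓝 t := Icc_mem_nhds ht.1 ht.2
  unfold gSpeedOn Gfun
  rw [derivWithin_of_mem_nhds h1, derivWithin_of_mem_nhds h1]

private lemma ae_ne_real (a : ℝ) : ∀ᵐ t : ℝ ∂(volume : Measure ℝ), t ≠ a := by
  have h : (volume : Measure ℝ) {a} = 0 := Real.volume_singleton
  rw [ae_iff]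
  simpa [not_not, Set.setOf_eq_eq_singleton] using h

/-- For `α ∈ R_g` and any locally Lipschitz `w` on `[0,1)`
with `w(0) = 0` and finite denominator `∫₀¹ |w|^p F_α |α'|_g dt < ∞`, the
Rayleigh quotient of `w` bounds `λ_{1,p}(α)` from above (stated multiplicatively
in `ℝ≥0∞` to account for a possibly infinite numerator). -/
theorem simons_stmt13 (n : ℕ) (hn : 2 ≤ n) (cn : ℝ) (hcn : 0 < cn)
    (x0 y0 : ℝ) (hy0 : 0 < y0) (hxy : y0 ≤ x0)
    (α : ℝ → ℝ × ℝ) (hα : MemRg x0 y0 α)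
    (w : ℝ → ℝ) (hw : ∀ a ∈ Ico (0:ℝ) 1, ∃ K, LipschitzOnWith K w (Icc 0 a))
    (hw0 : w 0 = 0) (p : ℝ) (hp : 2 ≤ p)
    (hden : (∫⁻ t in Ioc (0:ℝ) 1,
      ENNReal.ofReal (denG n cn p (Icc 0 1) α w t)) < ⊤) :
    ENNReal.ofReal (lambdaG n cn p α) *
        (∫⁻ t in Ioc (0:ℝ) 1, ENNReal.ofReal (denG n cn p (Icc 0 1) α w t)) ≤
      ∫⁻ t in Ioc (0:ℝ) 1, ENNReal.ofReal (numG n cn p (Icc 0 1) α w t) := by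
  by_cases hNtop : (∫⁻ t in Ioc (0:ℝ) 1, ENNReal.ofReal (numG n cn p (Icc 0 1) α w t)) = ⊤
  · rw [hNtop]; exact le_top
  obtain ⟨⟨Kα, hKα⟩, hα0, hα1, hαint⟩ := hα
  have hp0 : (0:ℝ) ≤ p := by linarith
  have hp1 : (0:ℝ) ≤ p - 1 := by linarith
  have hpne : p ≠ 0 := by linarith
  have hac : ContinuousOn α (Icc 0 1) := hKα.continuousOn
  -- coordinates of α are nonnegative on [0,1]
  have hcoords : ∀ t ∈ Icc (0:ℝ) 1, 0 ≤ (α t).1 ∧ 0 ≤ (α t).2 := by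
    intro t ht
    rcases lt_or_eq_of_le ht.2 with h | h
    · have h2 := hαint t ⟨ht.1, h⟩
      simp only [Pint, Set.mem_setOf_eq] at h2
      exact ⟨h2.1.le, h2.2.le⟩
    · subst h
      simp only [Pbdry, Set.mem_setOf_eq] at hα1
      exact ⟨hα1.1.1, hα1.1.2⟩
  have hFnn : ∀ t ∈ Icc (0:ℝ) 1, 0 ≤ Fvol n cn (α t) := by
    intro t ht
    obtain ⟨h1, h2⟩ := hcoords t ht
    unfold Fvol
    exact mul_nonneg (mul_nonneg hcn.le (pow_nonneg h1 _)) (pow_nonneg h2 _)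
  -- clamped version of α, continuous everywhere
  set cl : ℝ → ℝ := fun t => max 0 (min t 1) with hcl_def
  have hclc : Continuous cl := continuous_const.max (continuous_id.min continuous_const)
  have hclmem : ∀ t, cl t ∈ Icc (0:ℝ) 1 := fun t =>
    ⟨le_max_left _ _, max_le zero_le_one (min_le_right _ _)⟩
  set ab : ℝ → ℝ × ℝ := α ∘ cl with hab_def
  have habc : Continuous ab := hac.comp_continuous hclc hclmem
  have habeq : ∀ t ∈ Icc (0:ℝ) 1, ab t = α t := by
    intro t ht
    simp only [hab_def, Function.comp_apply, hcl_def, min_eq_left ht.2, max_eq_right ht.1]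
  have habFnn : ∀ t, 0 ≤ Fvol n cn (ab t) := fun t => by
    rw [show ab t = α (cl t) from rfl]
    exact hFnn (cl t) (hclmem t)
  -- bound on the speed
  have hd1 : ∀ t ∈ Ioo (0:ℝ) 1, |deriv (fun u => (α u).1) t| ≤ (Kα : ℝ) := by
    intro t ht
    have hL1 : LipschitzOnWith Kα (fun u => (α u).1) (Icc 0 1) := by
      exact (one_mul Kα ▸ LipschitzWith.prod_fst.comp_lipschitzOnWith hKα :
        LipschitzOnWith Kα (Prod.fst ∘ α) (Icc 0 1))
    by_cases hd : DifferentiableAt ℝ (fun u => (α u).1) t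
    · simpa [Real.norm_eq_abs] using
        hd.hasDerivAt.le_of_lipschitzOn (Icc_mem_nhds ht.1 ht.2) hL1
    · rw [deriv_zero_of_not_differentiableAt hd, abs_zero]; exact Kα.coe_nonneg
  have hd2 : ∀ t ∈ Ioo (0:ℝ) 1, |deriv (fun u => (α u).2) t| ≤ (Kα : ℝ) := by
    intro t ht
    have hL2 : LipschitzOnWith Kα (fun u => (α u).2) (Icc 0 1) := by
      exact (one_mul Kα ▸ LipschitzWith.prod_snd.comp_lipschitzOnWith hKα :
        LipschitzOnWith Kα (Prod.snd ∘ α) (Icc 0 1))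
    by_cases hd : DifferentiableAt ℝ (fun u => (α u).2) t
    · simpa [Real.norm_eq_abs] using
        hd.hasDerivAt.le_of_lipschitzOn (Icc_mem_nhds ht.1 ht.2) hL2
    · rw [deriv_zero_of_not_differentiableAt hd, abs_zero]; exact Kα.coe_nonneg
  set B : ℝ := Real.sqrt ((Kα:ℝ) ^ 2 + (Kα:ℝ) ^ 2) with hB_def
  have hBnn : (0:ℝ) ≤ B := Real.sqrt_nonneg _
  have hGb : ∀ t ∈ Ioo (0:ℝ) 1, Gfun α t ≤ B := by
    intro t ht
    apply Real.sqrt_le_sqrt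
    have h1 := hd1 t ht; have h2 := hd2 t ht
    have e1 : (deriv (fun u => (α u).1) t) ^ 2 ≤ (Kα:ℝ) ^ 2 :=
      sq_le_sq' (by linarith [(abs_le.mp h1).1]) (abs_le.mp h1).2
    have e2 : (deriv (fun u => (α u).2) t) ^ 2 ≤ (Kα:ℝ) ^ 2 :=
      sq_le_sq' (by linarith [(abs_le.mp h2).1]) (abs_le.mp h2).2
    linarith
  -- bound for Fvol along α
  have hFc : ContinuousOn (fun t => Fvol n cn (α t)) (Icc 0 1) :=
    (Fvol_continuous n cn).comp_continuousOn hac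
  obtain ⟨t0, ht0, hmax'⟩ :=
    isCompact_Icc.exists_isMaxOn (nonempty_Icc.mpr zero_le_one) hFc
  have hmax := isMaxOn_iff.mp hmax'
  set CF : ℝ := Fvol n cn (α t0) with hCF_def
  have hCFnn : 0 ≤ CF := hFnn t0 ht0
  -- nonnegativity of the integrands
  have hnum_nn : ∀ (v : ℝ → ℝ), ∀ t ∈ Icc (0:ℝ) 1, 0 ≤ numG n cn p (Icc 0 1) α v t := by
    intro v t ht
    unfold numG gSpeedOn
    exact mul_nonneg (mul_nonneg (Real.rpow_nonneg (abs_nonneg _) _) (hFnn t ht))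
      (Real.rpow_nonneg (Real.sqrt_nonneg _) _)
  have hden_nn : ∀ (v : ℝ → ℝ), ∀ t ∈ Icc (0:ℝ) 1, 0 ≤ denG n cn p (Icc 0 1) α v t := by
    intro v t ht
    unfold denG gSpeedOn
    exact mul_nonneg (mul_nonneg (Real.rpow_nonneg (abs_nonneg _) _) (hFnn t ht))
      (Real.sqrt_nonneg _)
  have hrestr : volume.restrict (Ioc (0:ℝ) 1) = volume.restrict (Ioo (0:ℝ) 1) :=
    (Measure.restrict_congr_set Ioo_ae_eq_Ioc).symm
  have hfinmeas : IsFiniteMeasure (volume.restrict (Ioo (0:ℝ) 1)) := by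
    constructor
    rw [Measure.restrict_apply_univ, Real.volume_Ioo]
    exact ENNReal.ofReal_lt_top
  -- the measurable version of the numerator integrand
  set q : ℝ → ℝ := fun t => |deriv w t| ^ p * Fvol n cn (ab t) * (Gfun α t ^ (p - 1))⁻¹
    with hq_def
  have hqm : Measurable q := by
    refine Measurable.mul (Measurable.mul ?_ ?_) ?_
    · exact (Real.continuous_rpow_const hp0).measurable.comp ((measurable_deriv w).abs)
    · exact ((Fvol_continuous n cn).comp habc).measurable
    · exact ((Real.continuous_rpow_const hp1).measurable.comp (Gfun_meas α)).inv
  have hqnn : ∀ t, 0 ≤ q t := by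
    intro t
    exact mul_nonneg (mul_nonneg (Real.rpow_nonneg (abs_nonneg _) _) (habFnn t))
      (inv_nonneg.mpr (Real.rpow_nonneg (Gfun_nonneg α t) _))
  have hq_eq : ∀ t ∈ Ioo (0:ℝ) 1, numG n cn p (Icc 0 1) α w t = q t := by
    intro t ht
    have h1 : Icc (0:ℝ) 1 ∈ 𝓝 t := Icc_mem_nhds ht.1 ht.2
    have h2 : gSpeedOn (Icc 0 1) α t ^ (1 - p) = (Gfun α t ^ (p - 1))⁻¹ := by
      rw [speed_eq_Gfun α ht, show (1:ℝ) - p = -(p - 1) by ring,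
        Real.rpow_neg (Gfun_nonneg α t)]
    simp only [numG, hq_def]
    rw [derivWithin_of_mem_nhds h1, h2, habeq t (Ioo_subset_Icc_self ht)]
  -- the set defining lambdaG and its basic properties
  set S : Set ℝ := {r | ∃ v : ℝ → ℝ, (∃ K, LipschitzOnWith K v (Icc 0 1)) ∧ v 0 = 0 ∧
    IntervalIntegrable (numG n cn p (Icc 0 1) α v) volume 0 1 ∧
    IntervalIntegrable (denG n cn p (Icc 0 1) α v) volume 0 1 ∧
    (0 < ∫ t in (0:ℝ)..1, denG n cn p (Icc 0 1) α v t) ∧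
    r = (∫ t in (0:ℝ)..1, numG n cn p (Icc 0 1) α v t) /
        (∫ t in (0:ℝ)..1, denG n cn p (Icc 0 1) α v t)} with hS_def
  have hlamS : lambdaG n cn p α = sInf S := rfl
  have hSnn : ∀ x ∈ S, 0 ≤ x := by
    rintro x ⟨v, hv, hv0, hvN, hvD, hvpos, rfl⟩
    exact div_nonneg
      (intervalIntegral.integral_nonneg zero_le_one fun u hu => hnum_nn v u hu) hvpos.le
  have hSbdd : BddBelow S := ⟨0, hSnn⟩
  -- key estimate for each a < 1
  have key : ∀ a ∈ Ioo (0:ℝ) 1,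
      ENNReal.ofReal (lambdaG n cn p α) *
        (∫⁻ t in Ioc (0:ℝ) a, ENNReal.ofReal (denG n cn p (Icc 0 1) α w t)) ≤
      ∫⁻ t in Ioc (0:ℝ) 1, ENNReal.ofReal (numG n cn p (Icc 0 1) α w t) := by
    intro a ha
    obtain ⟨ha0, ha1⟩ := ha
    obtain ⟨Kw, hKw⟩ := hw a ⟨ha0.le, ha1⟩
    set wa : ℝ → ℝ := fun t => w (min t a) with hwa_def
    set cla : ℝ → ℝ := fun t => max 0 (min t a) with hcla_def
    set wb : ℝ → ℝ := w ∘ cla with hwb_def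
    have hclac : Continuous cla := by
      rw [hcla_def]
      exact continuous_const.max (continuous_id.min continuous_const)
    have hclamem : ∀ t, cla t ∈ Icc (0:ℝ) a := by
      intro t
      have h0 : max 0 (min t a) ∈ Icc (0:ℝ) a :=
        ⟨le_max_left _ _, max_le ha0.le (min_le_right _ _)⟩
      simpa [hcla_def] using h0
    have hwbc : Continuous wb := hKw.continuousOn.comp_continuous hclac hclamem
    have hwb_eq : ∀ t, 0 ≤ t → wa t = wb t := by
      intro t ht
      simp only [hwa_def, hwb_def, hcla_def, Function.comp_apply,
        max_eq_right (le_min ht ha0.le : (0:ℝ) ≤ min t a)]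
    have hwa_lip : ∃ K, LipschitzOnWith K wa (Icc 0 1) := by
      have hmin0 : LipschitzOnWith 1 (fun t : ℝ => min (id t) a) (Icc 0 1) :=
        (LipschitzWith.id.min_const a).lipschitzOnWith
      have hmin : LipschitzOnWith 1 (fun t : ℝ => min t a) (Icc 0 1) := hmin0
      have hmaps : Set.MapsTo (fun t : ℝ => min t a) (Icc 0 1) (Icc 0 a) :=
        fun t ht => ⟨le_min ht.1 ha0.le, min_le_right _ _⟩
      exact ⟨Kw * 1, hKw.comp hmin hmaps⟩
    have hwa0 : wa 0 = 0 := by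
      simp only [hwa_def, min_eq_left ha0.le, hw0]
    -- the numerator integrand for wa agrees a.e. with an indicator version of q
    set Qa : ℝ → ℝ := (Ioo (0:ℝ) a).indicator q with hQa_def
    have hQam : Measurable Qa := hqm.indicator measurableSet_Ioo
    have hQann : ∀ t, 0 ≤ Qa t := fun t => by
      by_cases h : t ∈ Ioo (0:ℝ) a
      · rw [hQa_def, Set.indicator_of_mem h]; exact hqnn t
      · rw [hQa_def, Set.indicator_of_notMem h]
    have hQa_eq : ∀ t ∈ Ioo (0:ℝ) 1, t ≠ a → numG n cn p (Icc 0 1) α wa t = Qa t := by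
      intro t ht hta
      have h1 : Icc (0:ℝ) 1 ∈ 𝓝 t := Icc_mem_nhds ht.1 ht.2
      rcases lt_or_gt_of_ne hta with hlt | hgt
      · have hev : wa =ᶠ[𝓝 t] w := by
          filter_upwards [Iio_mem_nhds hlt] with x hx
          simp only [hwa_def, min_eq_left (le_of_lt (mem_Iio.mp hx))]
        have hder : derivWithin wa (Icc 0 1) t = derivWithin w (Icc 0 1) t := by
          rw [derivWithin_of_mem_nhds h1, derivWithin_of_mem_nhds h1, hev.deriv_eq]
        have heq1 : numG n cn p (Icc 0 1) α wa t = numG n cn p (Icc 0 1) α w t := by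
          simp only [numG, hder]
        have hmem2 : t ∈ Ioo (0:ℝ) a := ⟨ht.1, hlt⟩
        rw [heq1, hq_eq t ht, hQa_def, Set.indicator_of_mem hmem2]
      · have hev : wa =ᶠ[𝓝 t] (fun _ => w a) := by
          filter_upwards [Ioi_mem_nhds hgt] with x hx
          simp only [hwa_def, min_eq_right (le_of_lt (mem_Ioi.mp hx))]
        have hder : derivWithin wa (Icc 0 1) t = 0 := by
          rw [derivWithin_of_mem_nhds h1, hev.deriv_eq, deriv_const]
        have h0 : numG n cn p (Icc 0 1) α wa t = 0 := by
          simp only [numG, hder, abs_zero, Real.zero_rpow hpne, zero_mul]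
        rw [h0, hQa_def,
          Set.indicator_of_notMem (fun h => absurd h.2 (not_lt.mpr hgt.le))]
    have haeN : numG n cn p (Icc 0 1) α wa =ᵐ[volume.restrict (Ioo (0:ℝ) 1)] Qa := by
      filter_upwards [ae_restrict_mem measurableSet_Ioo,
        ae_restrict_of_ae (ae_ne_real a)] with t ht hta
      exact hQa_eq t ht hta
    -- lintegral identity for Qa
    have hQa_lint : ∫⁻ t, ENNReal.ofReal (Qa t) ∂(volume.restrict (Ioo (0:ℝ) 1)) =
        ∫⁻ t in Ioo (0:ℝ) a, ENNReal.ofReal (numG n cn p (Icc 0 1) α w t) := by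
      have h1 : (fun t => ENNReal.ofReal (Qa t)) =
          (Ioo (0:ℝ) a).indicator (fun t => ENNReal.ofReal (q t)) := by
        funext t
        by_cases h : t ∈ Ioo (0:ℝ) a
        · rw [hQa_def, Set.indicator_of_mem h, Set.indicator_of_mem h]
        · rw [hQa_def, Set.indicator_of_notMem h, Set.indicator_of_notMem h,
            ENNReal.ofReal_zero]
      rw [h1, lintegral_indicator measurableSet_Ioo,
        Measure.restrict_restrict measurableSet_Ioo,
        Set.inter_eq_self_of_subset_left (Ioo_subset_Ioo le_rfl ha1.le)]
      refine setLIntegral_congr_fun measurableSet_Ioo (fun t ht => ?_)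
      rw [hq_eq t (Ioo_subset_Ioo le_rfl ha1.le ht)]
    have hQa_le : ∫⁻ t in Ioo (0:ℝ) a, ENNReal.ofReal (numG n cn p (Icc 0 1) α w t) ≤
        ∫⁻ t in Ioc (0:ℝ) 1, ENNReal.ofReal (numG n cn p (Icc 0 1) α w t) :=
      lintegral_mono_set (fun t ht => ⟨ht.1, ht.2.le.trans ha1.le⟩)
    -- integrability of the numerator for wa
    have hQaInt : Integrable Qa (volume.restrict (Ioo (0:ℝ) 1)) := by
      constructor
      · exact hQam.aestronglyMeasurable
      · rw [hasFiniteIntegral_iff_ofReal (ae_of_all _ hQann)]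
        calc ∫⁻ t, ENNReal.ofReal (Qa t) ∂(volume.restrict (Ioo (0:ℝ) 1))
            = ∫⁻ t in Ioo (0:ℝ) a,
                ENNReal.ofReal (numG n cn p (Icc 0 1) α w t) := hQa_lint
          _ ≤ ∫⁻ t in Ioc (0:ℝ) 1,
                ENNReal.ofReal (numG n cn p (Icc 0 1) α w t) := hQa_le
          _ < ⊤ := Ne.lt_top hNtop
    have hNaInt : IntervalIntegrable (numG n cn p (Icc 0 1) α wa) volume 0 1 := by
      rw [intervalIntegrable_iff_integrableOn_Ioc_of_le zero_le_one]
      show Integrable _ (volume.restrict (Ioc (0:ℝ) 1))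
      rw [hrestr]
      exact hQaInt.congr haeN.symm
    -- lintegral bound for the numerator of wa
    have hNa_lint : ∫⁻ t in Ioc (0:ℝ) 1, ENNReal.ofReal (numG n cn p (Icc 0 1) α wa t) ≤
        ∫⁻ t in Ioc (0:ℝ) 1, ENNReal.ofReal (numG n cn p (Icc 0 1) α w t) := by
      calc ∫⁻ t in Ioc (0:ℝ) 1, ENNReal.ofReal (numG n cn p (Icc 0 1) α wa t)
          = ∫⁻ t, ENNReal.ofReal (Qa t) ∂(volume.restrict (Ioo (0:ℝ) 1)) := by
            rw [hrestr]
            exact lintegral_congr_ae (haeN.mono fun t ht => congrArg ENNReal.ofReal ht)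
        _ = ∫⁻ t in Ioo (0:ℝ) a,
              ENNReal.ofReal (numG n cn p (Icc 0 1) α w t) := hQa_lint
        _ ≤ _ := hQa_le
    -- the measurable bounded version of the denominator for wa
    set Ha : ℝ → ℝ := fun t => |wb t| ^ p * Fvol n cn (ab t) * Gfun α t with hHa_def
    have hHam : Measurable Ha := by
      refine Measurable.mul (Measurable.mul ?_ ?_) (Gfun_meas α)
      · exact (Real.continuous_rpow_const hp0).measurable.comp hwbc.abs.measurable
      · exact ((Fvol_continuous n cn).comp habc).measurable
    have hHann : ∀ t, 0 ≤ Ha t := fun t =>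
      mul_nonneg (mul_nonneg (Real.rpow_nonneg (abs_nonneg _) _) (habFnn t))
        (Gfun_nonneg α t)
    have hHa_eq : ∀ t ∈ Ioo (0:ℝ) 1, denG n cn p (Icc 0 1) α wa t = Ha t := by
      intro t ht
      simp only [denG, hHa_def]
      rw [speed_eq_Gfun α ht, hwb_eq t ht.1.le, habeq t (Ioo_subset_Icc_self ht)]
    -- bound on Ha over (0,1)
    obtain ⟨t1, ht1, hwmax'⟩ := isCompact_Icc.exists_isMaxOn (nonempty_Icc.mpr ha0.le)
      (continuous_abs.comp_continuousOn hKw.continuousOn)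
    have hwmax := isMaxOn_iff.mp hwmax'
    set Cw : ℝ := |w t1| with hCw_def
    have hCwnn : (0:ℝ) ≤ Cw := abs_nonneg _
    have hwb_le : ∀ t, |wb t| ≤ Cw := by
      intro t
      have h2 := hwmax (cla t) (hclamem t)
      simpa only [hwb_def, Function.comp_apply] using h2
    have hHa_bdd : ∀ t ∈ Ioo (0:ℝ) 1, Ha t ≤ Cw ^ p * CF * B := by
      intro t ht
      have h1 : |wb t| ^ p ≤ Cw ^ p := Real.rpow_le_rpow (abs_nonneg _) (hwb_le t) hp0
      have h2 : Fvol n cn (ab t) ≤ CF := by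
        rw [show ab t = α (cl t) from rfl]
        exact hmax (cl t) (hclmem t)
      have h3 : Gfun α t ≤ B := hGb t ht
      calc Ha t ≤ |wb t| ^ p * Fvol n cn (ab t) * B :=
            mul_le_mul_of_nonneg_left h3 (mul_nonneg (Real.rpow_nonneg (abs_nonneg _) _)
              (habFnn t))
        _ ≤ Cw ^ p * CF * B := by
            apply mul_le_mul_of_nonneg_right _ hBnn
            exact mul_le_mul h1 h2 (habFnn t) (Real.rpow_nonneg hCwnn _)
    have hHaInt : Integrable Ha (volume.restrict (Ioo (0:ℝ) 1)) := by
      constructor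
      · exact hHam.aestronglyMeasurable
      · apply HasFiniteIntegral.of_bounded (C := Cw ^ p * CF * B)
        filter_upwards [ae_restrict_mem measurableSet_Ioo] with t ht
        rw [Real.norm_eq_abs, abs_of_nonneg (hHann t)]
        exact hHa_bdd t ht
    have hDaInt : Integrable (denG n cn p (Icc 0 1) α wa)
        (volume.restrict (Ioo (0:ℝ) 1)) := by
      refine hHaInt.congr ?_
      filter_upwards [ae_restrict_mem measurableSet_Ioo] with t ht
      exact (hHa_eq t ht).symm
    have hDaII : IntervalIntegrable (denG n cn p (Icc 0 1) α wa) volume 0 1 := by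
      rw [intervalIntegrable_iff_integrableOn_Ioc_of_le zero_le_one]
      show Integrable _ (volume.restrict (Ioc (0:ℝ) 1))
      rw [hrestr]
      exact hDaInt
    -- denG w is integrable on (0,a]
    have hden_eq_w : ∀ t ∈ Ioc (0:ℝ) a, denG n cn p (Icc 0 1) α w t = Ha t := by
      intro t ht
      have ht' : t ∈ Ioo (0:ℝ) 1 := ⟨ht.1, lt_of_le_of_lt ht.2 ha1⟩
      have hwt : w t = wb t := by
        have h1 : wa t = w t := by simp only [hwa_def, min_eq_left ht.2]
        rw [← h1, hwb_eq t ht.1.le]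
      simp only [denG, hHa_def]
      rw [speed_eq_Gfun α ht', hwt, habeq t (Ioo_subset_Icc_self ht')]
    have hDwInt : IntegrableOn (denG n cn p (Icc 0 1) α w) (Ioc (0:ℝ) a) := by
      have hss : Ioc (0:ℝ) a ⊆ Ioo (0:ℝ) 1 := fun t ht =>
        ⟨ht.1, lt_of_le_of_lt ht.2 ha1⟩
      refine (hHaInt.mono_measure (Measure.restrict_mono hss le_rfl)).congr ?_
      filter_upwards [ae_restrict_mem measurableSet_Ioc] with t ht
      exact (hden_eq_w t ht).symm
    -- the real integral d_a and its lintegral form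
    set da : ℝ := ∫ t in (0:ℝ)..a, denG n cn p (Icc 0 1) α w t with hda_def
    have hda_lint : ∫⁻ t in Ioc (0:ℝ) a, ENNReal.ofReal (denG n cn p (Icc 0 1) α w t) =
        ENNReal.ofReal da := by
      rw [hda_def, intervalIntegral.integral_of_le ha0.le]
      refine (ofReal_integral_eq_lintegral_ofReal hDwInt ?_).symm
      filter_upwards [ae_restrict_mem measurableSet_Ioc] with t ht
      exact hden_nn w t ⟨ht.1.le, ht.2.trans ha1.le⟩
    -- comparison of denominators
    have hDcomp : da ≤ ∫ t in (0:ℝ)..1, denG n cn p (Icc 0 1) α wa t := by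
      have h0a : IntervalIntegrable (denG n cn p (Icc 0 1) α wa) volume 0 a :=
        hDaII.mono_set (by
          rw [Set.uIcc_of_le ha0.le, Set.uIcc_of_le zero_le_one]
          exact Icc_subset_Icc le_rfl ha1.le)
      have ha1' : IntervalIntegrable (denG n cn p (Icc 0 1) α wa) volume a 1 :=
        hDaII.mono_set (by
          rw [Set.uIcc_of_le ha1.le, Set.uIcc_of_le zero_le_one]
          exact Icc_subset_Icc ha0.le le_rfl)
      have hsplit := intervalIntegral.integral_add_adjacent_intervals h0a ha1'
      have heq : ∫ t in (0:ℝ)..a, denG n cn p (Icc 0 1) α wa t = da := by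
        rw [hda_def]
        refine intervalIntegral.integral_congr fun t ht => ?_
        rw [Set.uIcc_of_le ha0.le] at ht
        simp only [denG, hwa_def, min_eq_left ht.2]
      have hnn : 0 ≤ ∫ t in a..1, denG n cn p (Icc 0 1) α wa t :=
        intervalIntegral.integral_nonneg ha1.le fun u hu =>
          hden_nn wa u ⟨ha0.le.trans hu.1, hu.2⟩
      linarith [hsplit, heq]
    -- main case split on positivity of da
    by_cases hda_pos : 0 < da
    · set Nwa : ℝ := ∫ t in (0:ℝ)..1, numG n cn p (Icc 0 1) α wa t with hNwa_def
      set Dwa : ℝ := ∫ t in (0:ℝ)..1, denG n cn p (Icc 0 1) α wa t with hDwa_def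
      have hDwa_pos : 0 < Dwa := lt_of_lt_of_le hda_pos hDcomp
      have hmem : Nwa / Dwa ∈ S := ⟨wa, hwa_lip, hwa0, hNaInt, hDaII, hDwa_pos, rfl⟩
      have hlam_le : lambdaG n cn p α ≤ Nwa / Dwa := by
        rw [hlamS]; exact csInf_le hSbdd hmem
      have hlam_nn : 0 ≤ lambdaG n cn p α := by
        rw [hlamS]; exact Real.sInf_nonneg hSnn
      have hchain : lambdaG n cn p α * da ≤ Nwa := by
        have h1 : lambdaG n cn p α * Dwa ≤ Nwa := (le_div_iff₀ hDwa_pos).mp hlam_le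
        have h2 : lambdaG n cn p α * da ≤ lambdaG n cn p α * Dwa :=
          mul_le_mul_of_nonneg_left hDcomp hlam_nn
        linarith
      have hNwa_lint : ENNReal.ofReal Nwa =
          ∫⁻ t in Ioc (0:ℝ) 1, ENNReal.ofReal (numG n cn p (Icc 0 1) α wa t) := by
        rw [hNwa_def, intervalIntegral.integral_of_le zero_le_one]
        refine ofReal_integral_eq_lintegral_ofReal
          ((intervalIntegrable_iff_integrableOn_Ioc_of_le zero_le_one).mp hNaInt) ?_
        filter_upwards [ae_restrict_mem measurableSet_Ioc] with t ht
        exact hnum_nn wa t ⟨ht.1.le, ht.2⟩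
      calc ENNReal.ofReal (lambdaG n cn p α) *
            (∫⁻ t in Ioc (0:ℝ) a, ENNReal.ofReal (denG n cn p (Icc 0 1) α w t))
          = ENNReal.ofReal (lambdaG n cn p α * da) := by
            rw [hda_lint, ENNReal.ofReal_mul hlam_nn]
        _ ≤ ENNReal.ofReal Nwa := ENNReal.ofReal_le_ofReal hchain
        _ = ∫⁻ t in Ioc (0:ℝ) 1, ENNReal.ofReal (numG n cn p (Icc 0 1) α wa t) := hNwa_lint
        _ ≤ _ := hNa_lint
    · have hzero : ENNReal.ofReal da = 0 := ENNReal.ofReal_eq_zero.mpr (not_lt.mp hda_pos)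
      rw [hda_lint, hzero, mul_zero]
      exact zero_le
  -- pass to the limit a → 1 via a supremum of lintegrals
  set u : ℕ → ℝ := fun k => 1 - 1 / ((k : ℝ) + 2) with hu_def
  have hu_mem : ∀ k, u k ∈ Ioo (0:ℝ) 1 := by
    intro k
    have hk0 : (0:ℝ) ≤ (k:ℝ) := Nat.cast_nonneg k
    have h4 : 0 < 1 / ((k:ℝ) + 2) := by positivity
    have h3 : 1 / ((k:ℝ) + 2) ≤ 1 / 2 := one_div_le_one_div_of_le two_pos (by linarith)
    constructor
    · simp only [hu_def]; linarith
    · simp only [hu_def]; linarith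
  have hu_mono : ∀ k, u k ≤ u (k + 1) := by
    intro k
    have hk0 : (0:ℝ) ≤ (k:ℝ) := Nat.cast_nonneg k
    have h3 : 1 / ((k:ℝ) + 1 + 2) ≤ 1 / ((k:ℝ) + 2) :=
      one_div_le_one_div_of_le (by linarith) (by linarith)
    simp only [hu_def]
    push_cast
    linarith
  set f : ℕ → ℝ → ENNReal := fun k =>
    (Ioc (0:ℝ) (u k)).indicator (fun t => ENNReal.ofReal (denG n cn p (Icc 0 1) α w t))
    with hf_def
  have hsubk : ∀ k, Ioc (0:ℝ) (u k) ⊆ Ioo (0:ℝ) 1 := fun k t ht =>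
    ⟨ht.1, lt_of_le_of_lt ht.2 (hu_mem k).2⟩
  have hfm : ∀ k, Measurable (f k) := by
    intro k
    obtain ⟨Kk, hKk⟩ := hw (u k) ⟨(hu_mem k).1.le, (hu_mem k).2⟩
    set wbk : ℝ → ℝ := w ∘ (fun t => max 0 (min t (u k))) with hwbk_def
    have hclkmem : ∀ t : ℝ, max 0 (min t (u k)) ∈ Icc (0:ℝ) (u k) := fun t =>
      ⟨le_max_left _ _, max_le (hu_mem k).1.le (min_le_right _ _)⟩
    have hwbkc : Continuous wbk :=
      hKk.continuousOn.comp_continuous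
        (continuous_const.max (continuous_id.min continuous_const)) hclkmem
    have heq : f k = (Ioc (0:ℝ) (u k)).indicator
        (fun t => ENNReal.ofReal (|wbk t| ^ p * Fvol n cn (ab t) * Gfun α t)) := by
      funext t
      by_cases h : t ∈ Ioc (0:ℝ) (u k)
      · simp only [hf_def]
        rw [Set.indicator_of_mem h, Set.indicator_of_mem h]
        congr 1
        have ht' : t ∈ Ioo (0:ℝ) 1 := hsubk k h
        have hwt : w t = wbk t := by
          simp only [hwbk_def, Function.comp_apply, min_eq_left h.2,
            max_eq_right h.1.le]
        simp only [denG]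
        rw [speed_eq_Gfun α ht', hwt, habeq t (Ioo_subset_Icc_self ht')]
      · simp only [hf_def]
        rw [Set.indicator_of_notMem h, Set.indicator_of_notMem h]
    rw [heq]
    refine Measurable.indicator ?_ measurableSet_Ioc
    refine ENNReal.measurable_ofReal.comp ?_
    refine Measurable.mul (Measurable.mul ?_ ?_) (Gfun_meas α)
    · exact (Real.continuous_rpow_const hp0).measurable.comp hwbkc.abs.measurable
    · exact ((Fvol_continuous n cn).comp habc).measurable
  have hmono : Monotone f := by
    apply monotone_nat_of_le_succ
    intro k t
    by_cases h : t ∈ Ioc (0:ℝ) (u k)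
    · have hmem2 : t ∈ Ioc (0:ℝ) (u (k + 1)) := ⟨h.1, h.2.trans (hu_mono k)⟩
      simp only [hf_def]
      rw [Set.indicator_of_mem h, Set.indicator_of_mem hmem2]
    · simp only [hf_def]
      rw [Set.indicator_of_notMem h]
      exact zero_le
  have hsup : ∀ t ∈ Ioo (0:ℝ) 1,
      ENNReal.ofReal (denG n cn p (Icc 0 1) α w t) = ⨆ k, f k t := by
    intro t ht
    apply le_antisymm
    · obtain ⟨m, hm⟩ := exists_nat_one_div_lt (show (0:ℝ) < 1 - t by linarith [ht.2])
      have hk0 : (0:ℝ) ≤ (m:ℝ) := Nat.cast_nonneg m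
      have h5 : 1 / ((m:ℝ) + 2) ≤ 1 / ((m:ℝ) + 1) :=
        one_div_le_one_div_of_le (by linarith) (by linarith)
      have hle : t ≤ u m := by
        simp only [hu_def]; linarith
      have heq3 : ENNReal.ofReal (denG n cn p (Icc 0 1) α w t) = f m t := by
        have hmem3 : t ∈ Ioc (0:ℝ) (u m) := ⟨ht.1, hle⟩
        simp only [hf_def]
        rw [Set.indicator_of_mem hmem3]
      rw [heq3]
      exact le_iSup (fun k => f k t) m
    · refine iSup_le fun k => ?_
      by_cases h : t ∈ Ioc (0:ℝ) (u k)
      · simp only [hf_def]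
        rw [Set.indicator_of_mem h]
      · simp only [hf_def]
        rw [Set.indicator_of_notMem h]
        exact zero_le
  have hDrw : (∫⁻ t in Ioc (0:ℝ) 1, ENNReal.ofReal (denG n cn p (Icc 0 1) α w t)) =
      ⨆ k, ∫⁻ t in Ioc (0:ℝ) (u k), ENNReal.ofReal (denG n cn p (Icc 0 1) α w t) := by
    rw [hrestr, setLIntegral_congr_fun measurableSet_Ioo hsup,
      lintegral_iSup hfm hmono]
    refine iSup_congr fun k => ?_
    simp only [hf_def]
    rw [lintegral_indicator measurableSet_Ioc,
      Measure.restrict_restrict measurableSet_Ioc,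
      Set.inter_eq_self_of_subset_left (hsubk k)]
  rw [hDrw, ENNReal.mul_iSup]
  exact iSup_le fun k => key (u k) (hu_mem k)
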